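/- Fix an integer M ≥ 1, reals Ae > 0, 0 < z_th < Ae, r₀, r₁ ∈ (0,1) with r₀ + r₁ = 1, and μ > 0. For σ, σ₀ > 0 set x₁ = (z_th − Ae)/√(σ² + σ₀²/M) and x₂ = z_th/σ₀, and define the posterior probability q₁(σ,σ₀) = Q(x₁)·r₁ / (Q(x₁)·r₁ + Q(x₂)·r₀). Then H₂(q₁(σ,σ₀)) / (σ² + σ₀²/M)^μ → 0 as (σ, σ₀) → (0⁺, 0⁺) (Theorem 2, case N̂₁ = 1). -/

import Mathlib

open MeasureTheory Filter Real

/-- The Gaussian tail function `Q(x) = ∫_x^∞ (1/√(2π)) e^{−u²/2} du`. -/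
noncomputable def gaussQ (x : ℝ) : ℝ :=
  ∫ u in Set.Ioi x, (Real.sqrt (2 * Real.pi))⁻¹ * Real.exp (-u ^ 2 / 2)

/-- Binary entropy function. -/
noncomputable def H2 (x : ℝ) : ℝ := -x * Real.log x - (1 - x) * Real.log (1 - x)

lemma phi_integrable :
    Integrable (fun u : ℝ => (Real.sqrt (2 * Real.pi))⁻¹ * Real.exp (-u ^ 2 / 2)) := by
  have h : Integrable (fun u : ℝ => Real.exp (-(1/2 : ℝ) * u ^ 2)) :=
    integrable_exp_neg_mul_sq (by norm_num)
  have h2 := h.const_mul (Real.sqrt (2 * Real.pi))⁻¹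
  convert h2 using 2 with u
  ring_nf

lemma phi_integral :
    ∫ u : ℝ, (Real.sqrt (2 * Real.pi))⁻¹ * Real.exp (-u ^ 2 / 2) = 1 := by
  rw [MeasureTheory.integral_const_mul]
  have : (fun u : ℝ => Real.exp (-u ^ 2 / 2)) = fun u : ℝ => Real.exp (-(1/2 : ℝ) * u ^ 2) := by
    funext u; ring_nf
  rw [this, integral_gaussian]
  rw [show Real.pi / (1/2 : ℝ) = 2 * Real.pi by ring]
  exact inv_mul_cancel₀ (by positivity)

lemma gaussQ_zero : gaussQ 0 = 1 / 2 := by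
  have habs := integral_comp_abs
    (f := fun u : ℝ => (Real.sqrt (2 * Real.pi))⁻¹ * Real.exp (-u ^ 2 / 2))
  simp only [sq_abs] at habs
  rw [phi_integral] at habs
  rw [gaussQ]
  linarith

lemma gaussQ_anti {x y : ℝ} (h : x ≤ y) : gaussQ y ≤ gaussQ x := by
  apply setIntegral_mono_set phi_integrable.integrableOn
  · filter_upwards with u
    positivity
  · exact HasSubset.Subset.eventuallyLE (Set.Ioi_subset_Ioi h)

lemma gaussQ_pos (x : ℝ) : 0 < gaussQ x := by
  rw [gaussQ]
  rw [setIntegral_pos_iff_support_of_nonneg_ae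
    (by filter_upwards with u; positivity) phi_integrable.integrableOn]
  have hsupp : Function.support
      (fun u : ℝ => (Real.sqrt (2 * Real.pi))⁻¹ * Real.exp (-u ^ 2 / 2)) = Set.univ := by
    ext u
    simp only [Function.mem_support, Set.mem_univ, iff_true]
    positivity
  rw [hsupp, Set.univ_inter, Real.volume_Ioi]
  exact ENNReal.zero_lt_top

lemma integral_Ioi_comp_add (f : ℝ → ℝ) (a c : ℝ) :
    ∫ x in Set.Ioi a, f (x + c) = ∫ x in Set.Ioi (a + c), f x := by
  have A : MeasurableEmbedding fun x : ℝ => x + c :=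
    (Homeomorph.addRight c).isClosedEmbedding.measurableEmbedding
  have h := (measurePreserving_add_right volume c).setIntegral_preimage_emb A f
    (Set.Ioi (a + c))
  rw [← h]
  congr 1
  ext y
  simp [Set.mem_preimage]

lemma gaussQ_le {x : ℝ} (hx : 0 ≤ x) : gaussQ x ≤ Real.exp (-x ^ 2 / 2) / 2 := by
  have ht' := integral_Ioi_comp_add
    (fun u => (Real.sqrt (2 * Real.pi))⁻¹ * Real.exp (-u ^ 2 / 2)) 0 x
  rw [zero_add] at ht'
  have ht : gaussQ x =
      ∫ u in Set.Ioi (0 : ℝ), (Real.sqrt (2 * Real.pi))⁻¹ * Real.exp (-(u + x) ^ 2 / 2) := by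
    rw [gaussQ, ← ht']
  rw [ht]
  have hb : ∫ u in Set.Ioi (0 : ℝ), (Real.sqrt (2 * Real.pi))⁻¹ * Real.exp (-(u + x) ^ 2 / 2)
      ≤ ∫ u in Set.Ioi (0 : ℝ),
          Real.exp (-x ^ 2 / 2) * ((Real.sqrt (2 * Real.pi))⁻¹ * Real.exp (-u ^ 2 / 2)) := by
    apply setIntegral_mono_on
    · exact (phi_integrable.comp_add_right x).integrableOn
    · exact (phi_integrable.const_mul _).integrableOn
    · exact measurableSet_Ioi
    · intro u hu
      rw [Set.mem_Ioi] at hu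
      have h1 : Real.exp (-(u + x) ^ 2 / 2) ≤ Real.exp (-x ^ 2 / 2) * Real.exp (-u ^ 2 / 2) := by
        rw [← Real.exp_add]
        apply Real.exp_le_exp.2
        nlinarith [mul_nonneg hu.le hx]
      have hc : (0:ℝ) ≤ (Real.sqrt (2 * Real.pi))⁻¹ := by positivity
      calc (Real.sqrt (2 * Real.pi))⁻¹ * Real.exp (-(u + x) ^ 2 / 2)
          ≤ (Real.sqrt (2 * Real.pi))⁻¹ * (Real.exp (-x ^ 2 / 2) * Real.exp (-u ^ 2 / 2)) :=
            mul_le_mul_of_nonneg_left h1 hc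
        _ = Real.exp (-x ^ 2 / 2) * ((Real.sqrt (2 * Real.pi))⁻¹ * Real.exp (-u ^ 2 / 2)) := by
            ring
  refine hb.trans ?_
  rw [MeasureTheory.integral_const_mul]
  have h2 : (∫ u in Set.Ioi (0:ℝ), (Real.sqrt (2 * Real.pi))⁻¹ * Real.exp (-u ^ 2 / 2)) = 1/2 :=
    gaussQ_zero
  rw [h2]
  exact le_of_eq (by ring)

lemma H2_nonneg {x : ℝ} (h0 : 0 < x) (h1 : x < 1) : 0 ≤ H2 x := by
  have l1 : Real.log x ≤ 0 := Real.log_nonpos h0.le h1.le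
  have l2 : Real.log (1 - x) ≤ 0 := Real.log_nonpos (by linarith) (by linarith)
  unfold H2
  nlinarith

lemma H2_le {ε : ℝ} (h0 : 0 < ε) (h1 : ε < 1) : H2 (1 - ε) ≤ 3 * Real.sqrt ε := by
  have hse : 0 < Real.sqrt ε := Real.sqrt_pos.2 h0
  have hsq : Real.sqrt ε ^ 2 = ε := Real.sq_sqrt h0.le
  have h1' : 0 < 1 - ε := by linarith
  have t1 : Real.log (1 - ε)⁻¹ ≤ (1 - ε)⁻¹ - 1 := Real.log_le_sub_one_of_pos (by positivity)
  rw [Real.log_inv] at t1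
  have h1x : (1 - ε) * ((1 - ε)⁻¹ - 1) = ε := by
    field_simp
    ring
  have t2 : Real.log (Real.sqrt ε)⁻¹ ≤ (Real.sqrt ε)⁻¹ - 1 :=
    Real.log_le_sub_one_of_pos (by positivity)
  rw [Real.log_inv] at t2
  have hx : ε * (Real.sqrt ε)⁻¹ = Real.sqrt ε := by
    rw [← div_eq_mul_inv]
    exact Real.div_sqrt
  have hlog : Real.log ε = 2 * Real.log (Real.sqrt ε) := by
    rw [Real.log_sqrt h0.le]; ring
  have hεlog : ε * Real.log ε = 2 * (ε * Real.log (Real.sqrt ε)) := by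
    rw [hlog]; ring
  have hε_le : ε ≤ Real.sqrt ε := by nlinarith
  have b1 : -(1 - ε) * Real.log (1 - ε) ≤ ε := by
    nlinarith [mul_le_mul_of_nonneg_left t1 h1'.le, h1x]
  have b2 : -(ε * Real.log ε) ≤ 2 * Real.sqrt ε := by
    nlinarith [mul_le_mul_of_nonneg_left t2 h0.le, hx, hεlog]
  unfold H2
  rw [show (1 : ℝ) - (1 - ε) = ε by ring]
  linarith

lemma H2_post_le {Q1 Q2 r0 r1 E : ℝ} (hr0 : 0 < r0) (hr1 : 0 < r1)
    (hQ1 : 1 / 2 ≤ Q1) (hQ2 : 0 < Q2) (hE : 0 ≤ E) (hQ2le : Q2 ≤ E / 2) :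
    H2 (Q1 * r1 / (Q1 * r1 + Q2 * r0)) ≤ 3 * (Real.sqrt (r0 / r1) * Real.sqrt E) := by
  have hQ1pos : 0 < Q1 := lt_of_lt_of_le (by norm_num) hQ1
  have hD : 0 < Q1 * r1 + Q2 * r0 := by positivity
  have key1 : Q1 * r1 / (Q1 * r1 + Q2 * r0) = 1 - Q2 * r0 / (Q1 * r1 + Q2 * r0) := by
    field_simp
    ring
  have hεpos : 0 < Q2 * r0 / (Q1 * r1 + Q2 * r0) := by positivity
  have hεlt : Q2 * r0 / (Q1 * r1 + Q2 * r0) < 1 := by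
    rw [div_lt_one hD]
    nlinarith
  rw [key1]
  refine (H2_le hεpos hεlt).trans ?_
  have h2 : Q2 * r0 / (Q1 * r1 + Q2 * r0) ≤ r0 / r1 * E := by
    have s1 : Q2 * r0 / (Q1 * r1 + Q2 * r0) ≤ Q2 * r0 / (Q1 * r1) :=
      div_le_div₀ (by positivity) le_rfl (by positivity) (by nlinarith)
    refine s1.trans ?_
    have s2 : Q2 * r0 / (Q1 * r1) ≤ (E / 2 * r0) / (1 / 2 * r1) :=
      div_le_div₀ (by positivity) (mul_le_mul_of_nonneg_right hQ2le hr0.le)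
        (by positivity) (by nlinarith)
    refine s2.trans (le_of_eq ?_)
    field_simp
  calc 3 * Real.sqrt (Q2 * r0 / (Q1 * r1 + Q2 * r0))
      ≤ 3 * Real.sqrt (r0 / r1 * E) := by
        have := Real.sqrt_le_sqrt h2
        linarith
    _ = 3 * (Real.sqrt (r0 / r1) * Real.sqrt E) := by
        rw [Real.sqrt_mul (by positivity)]

set_option maxHeartbeats 1000000 in
theorem stmt_4 (M : ℕ) (hM : 1 ≤ M) (Ae zth r0 r1 μ : ℝ)
    (hAe : 0 < Ae) (hz1 : 0 < zth) (hz2 : zth < Ae)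
    (hr0 : r0 ∈ Set.Ioo (0 : ℝ) 1) (hr1 : r1 ∈ Set.Ioo (0 : ℝ) 1)
    (hsum : r0 + r1 = 1) (hμ : 0 < μ) :
    Tendsto (fun p : ℝ × ℝ =>
        H2 (gaussQ ((zth - Ae) / Real.sqrt (p.1 ^ 2 + p.2 ^ 2 / M)) * r1 /
            (gaussQ ((zth - Ae) / Real.sqrt (p.1 ^ 2 + p.2 ^ 2 / M)) * r1 +
              gaussQ (zth / p.2) * r0)) /
          (p.1 ^ 2 + p.2 ^ 2 / M) ^ μ)
      ((nhdsWithin 0 (Set.Ioi 0)) ×ˢ (nhdsWithin 0 (Set.Ioi 0))) (nhds 0) := by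
  obtain ⟨hr0a, hr0b⟩ := hr0
  obtain ⟨hr1a, hr1b⟩ := hr1
  have hM' : (0 : ℝ) < M := by exact_mod_cast hM
  have hbpos : 0 < zth ^ 2 / 4 := by positivity
  -- The bounding function, depending only on the second coordinate.
  have hg : Tendsto (fun y : ℝ =>
      3 * Real.sqrt (r0 / r1) * (M : ℝ) ^ μ *
        (((y ^ 2)⁻¹) ^ μ * Real.exp (-(zth ^ 2 / 4) * (y ^ 2)⁻¹)))
      (nhdsWithin 0 (Set.Ioi 0)) (nhds 0) := by
    have h1 : Tendsto (fun t : ℝ => t ^ μ * Real.exp (-(zth ^ 2 / 4) * t)) atTop (nhds 0) :=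
      tendsto_rpow_mul_exp_neg_mul_atTop_nhds_zero μ (zth ^ 2 / 4) hbpos
    have h2 : Tendsto (fun y : ℝ => (y ^ 2)⁻¹) (nhdsWithin 0 (Set.Ioi 0)) atTop := by
      apply tendsto_inv_nhdsGT_zero.comp
      apply tendsto_nhdsWithin_of_tendsto_nhds_of_eventually_within
      · have h0 : Tendsto (fun y : ℝ => y ^ 2) (nhds 0) (nhds (0:ℝ)) := by
          simpa using (continuous_pow 2).tendsto (0:ℝ)
        exact h0.mono_left nhdsWithin_le_nhds
      · filter_upwards [self_mem_nhdsWithin] with y hy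
        exact pow_pos (Set.mem_Ioi.1 hy) 2
    have h3 := (h1.comp h2).const_mul (3 * Real.sqrt (r0 / r1) * (M : ℝ) ^ μ)
    simpa [Function.comp] using h3
  have hgP : Tendsto (fun p : ℝ × ℝ =>
      3 * Real.sqrt (r0 / r1) * (M : ℝ) ^ μ *
        (((p.2 ^ 2)⁻¹) ^ μ * Real.exp (-(zth ^ 2 / 4) * (p.2 ^ 2)⁻¹)))
      ((nhdsWithin 0 (Set.Ioi 0)) ×ˢ (nhdsWithin 0 (Set.Ioi 0))) (nhds 0) :=
    hg.comp tendsto_snd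
  have hmem : ∀ᶠ p : ℝ × ℝ in (nhdsWithin 0 (Set.Ioi 0)) ×ˢ (nhdsWithin 0 (Set.Ioi 0)),
      0 < p.1 ∧ 0 < p.2 := by
    have h1 := Filter.Eventually.prod_inl
      (eventually_mem_nhdsWithin (a := (0:ℝ)) (s := Set.Ioi (0:ℝ)))
      (nhdsWithin (0:ℝ) (Set.Ioi 0))
    have h2 := Filter.Eventually.prod_inr
      (eventually_mem_nhdsWithin (a := (0:ℝ)) (s := Set.Ioi (0:ℝ)))
      (nhdsWithin (0:ℝ) (Set.Ioi 0))
    filter_upwards [h1, h2] with p hp1 hp2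
    exact ⟨hp1, hp2⟩
  -- key pointwise estimates
  have key : ∀ σ y : ℝ, 0 < σ → 0 < y →
      (0 ≤ H2 (gaussQ ((zth - Ae) / Real.sqrt (σ ^ 2 + y ^ 2 / M)) * r1 /
            (gaussQ ((zth - Ae) / Real.sqrt (σ ^ 2 + y ^ 2 / M)) * r1 +
              gaussQ (zth / y) * r0)) /
          (σ ^ 2 + y ^ 2 / M) ^ μ ∧
       H2 (gaussQ ((zth - Ae) / Real.sqrt (σ ^ 2 + y ^ 2 / M)) * r1 /
            (gaussQ ((zth - Ae) / Real.sqrt (σ ^ 2 + y ^ 2 / M)) * r1 +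
              gaussQ (zth / y) * r0)) /
          (σ ^ 2 + y ^ 2 / M) ^ μ ≤
        3 * Real.sqrt (r0 / r1) * (M : ℝ) ^ μ *
          (((y ^ 2)⁻¹) ^ μ * Real.exp (-(zth ^ 2 / 4) * (y ^ 2)⁻¹))) := by
    intro σ y hσ hy
    have hs : 0 < σ ^ 2 + y ^ 2 / M := by positivity
    have hQ1pos : 0 < gaussQ ((zth - Ae) / Real.sqrt (σ ^ 2 + y ^ 2 / M)) := gaussQ_pos _
    have hQ2pos : 0 < gaussQ (zth / y) := gaussQ_pos _
    have hx1 : (zth - Ae) / Real.sqrt (σ ^ 2 + y ^ 2 / M) ≤ 0 :=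
      div_nonpos_of_nonpos_of_nonneg (by linarith) (Real.sqrt_nonneg _)
    have hQ1half : 1 / 2 ≤ gaussQ ((zth - Ae) / Real.sqrt (σ ^ 2 + y ^ 2 / M)) := by
      have h := gaussQ_anti hx1
      rw [gaussQ_zero] at h
      exact h
    have hx2 : 0 ≤ zth / y := by positivity
    have hQ2le : gaussQ (zth / y) ≤ Real.exp (-(zth / y) ^ 2 / 2) / 2 := gaussQ_le hx2
    have hD : 0 < gaussQ ((zth - Ae) / Real.sqrt (σ ^ 2 + y ^ 2 / M)) * r1 +
        gaussQ (zth / y) * r0 :=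
      add_pos (mul_pos hQ1pos hr1a) (mul_pos hQ2pos hr0a)
    have hq1 : 0 < gaussQ ((zth - Ae) / Real.sqrt (σ ^ 2 + y ^ 2 / M)) * r1 /
        (gaussQ ((zth - Ae) / Real.sqrt (σ ^ 2 + y ^ 2 / M)) * r1 +
          gaussQ (zth / y) * r0) :=
      div_pos (mul_pos hQ1pos hr1a) hD
    have hq2 : gaussQ ((zth - Ae) / Real.sqrt (σ ^ 2 + y ^ 2 / M)) * r1 /
        (gaussQ ((zth - Ae) / Real.sqrt (σ ^ 2 + y ^ 2 / M)) * r1 +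
          gaussQ (zth / y) * r0) < 1 := by
      rw [div_lt_one hD]
      nlinarith [mul_pos hQ2pos hr0a]
    have hH2nn : 0 ≤ H2 (gaussQ ((zth - Ae) / Real.sqrt (σ ^ 2 + y ^ 2 / M)) * r1 /
        (gaussQ ((zth - Ae) / Real.sqrt (σ ^ 2 + y ^ 2 / M)) * r1 +
          gaussQ (zth / y) * r0)) := H2_nonneg hq1 hq2
    have hspow : 0 < (σ ^ 2 + y ^ 2 / M) ^ μ := Real.rpow_pos_of_pos hs μ
    refine ⟨div_nonneg hH2nn hspow.le, ?_⟩
    -- entropy bound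
    have hH2le := H2_post_le hr0a hr1a hQ1half hQ2pos
      (Real.exp_nonneg _) hQ2le
    have hsqrtE : Real.sqrt (Real.exp (-(zth / y) ^ 2 / 2)) =
        Real.exp (-(zth ^ 2 / 4) * (y ^ 2)⁻¹) := by
      rw [← Real.exp_half]
      congr 1
      rw [div_pow]
      ring
    rw [hsqrtE] at hH2le
    -- power bound
    have hy2M : 0 < y ^ 2 / (M : ℝ) := by positivity
    have hsge : y ^ 2 / (M : ℝ) ≤ σ ^ 2 + y ^ 2 / M := by
      nlinarith [sq_nonneg σ]
    have hpowpos : 0 < (y ^ 2 / (M : ℝ)) ^ μ := Real.rpow_pos_of_pos hy2M μ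
    have hdiv : H2 (gaussQ ((zth - Ae) / Real.sqrt (σ ^ 2 + y ^ 2 / M)) * r1 /
        (gaussQ ((zth - Ae) / Real.sqrt (σ ^ 2 + y ^ 2 / M)) * r1 +
          gaussQ (zth / y) * r0)) / (σ ^ 2 + y ^ 2 / M) ^ μ ≤
        (3 * (Real.sqrt (r0 / r1) * Real.exp (-(zth ^ 2 / 4) * (y ^ 2)⁻¹))) /
          (y ^ 2 / (M : ℝ)) ^ μ :=
      div_le_div₀ (by positivity) hH2le hpowpos
        (Real.rpow_le_rpow hy2M.le hsge hμ.le)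
    refine hdiv.trans (le_of_eq ?_)
    rw [Real.div_rpow (by positivity : (0:ℝ) ≤ y ^ 2) hM'.le,
      Real.inv_rpow (by positivity : (0:ℝ) ≤ y ^ 2)]
    have h1 : ((y : ℝ) ^ 2) ^ μ ≠ 0 := (Real.rpow_pos_of_pos (by positivity) μ).ne'
    have h2 : ((M : ℝ)) ^ μ ≠ 0 := (Real.rpow_pos_of_pos hM' μ).ne'
    field_simp
  apply squeeze_zero'
  · filter_upwards [hmem] with p hp
    exact (key p.1 p.2 hp.1 hp.2).1
  · filter_upwards [hmem] with p hp
    exact (key p.1 p.2 hp.1 hp.2).2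
  · exact hgP
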